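/- If U(θ) solves the matrix ODE dU/dθ = -(iH(θ) + W(θ))U(θ) with U(s) = I, where H(θ) is Hermitian and W(θ) is Hermitian positive semidefinite for each θ, then for all θ ≥ s the Hermitian matrix U(θ)†U(θ) satisfies 0 ≤ U(θ)†U(θ) ≤ I in the sense of quadratic forms. -/

import Mathlib

open Matrix ComplexOrder

lemma hasDerivAt_normSq_comp {c : ℝ → ℂ} {c' : ℂ} {x : ℝ} (h : HasDerivAt c c' x) :
    HasDerivAt (fun τ => Complex.normSq (c τ))
      (2 * ((starRingEnd ℂ) (c x) * c').re) x := by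
  have hre : HasDerivAt (fun τ => (c τ).re) (Complex.reCLM c') x :=
    Complex.reCLM.hasFDerivAt.comp_hasDerivAt x h
  have him : HasDerivAt (fun τ => (c τ).im) (Complex.imCLM c') x :=
    Complex.imCLM.hasFDerivAt.comp_hasDerivAt x h
  have h2 := (hre.mul hre).add (him.mul him)
  have hfun : (fun x => (c x).re * (c x).re + (c x).im * (c x).im)
      = fun τ => Complex.normSq (c τ) := funext fun τ => (Complex.normSq_apply _).symm
  change HasDerivAt (fun x => (c x).re * (c x).re + (c x).im * (c x).im) _ x at h2
  rw [hfun] at h2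
  convert h2 using 1
  simp only [Complex.mul_re, Complex.reCLM_apply, Complex.imCLM_apply,
    Complex.conj_re, Complex.conj_im]
  ring

theorem stmt5 (l : ℕ) (hl : 1 ≤ l) (s t : ℝ) (hst : s ≤ t)
    (H W : ℝ → Matrix (Fin l) (Fin l) ℂ)
    (hHcont : ∀ i j, ContinuousOn (fun θ => H θ i j) (Set.Icc s t))
    (hWcont : ∀ i j, ContinuousOn (fun θ => W θ i j) (Set.Icc s t))
    (hH : ∀ θ ∈ Set.Icc s t, (H θ).IsHermitian)
    (hW : ∀ θ ∈ Set.Icc s t, (W θ).PosSemidef)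
    (U : ℝ → Matrix (Fin l) (Fin l) ℂ)
    (hU0 : U s = 1)
    (hU : ∀ θ ∈ Set.Icc s t, ∀ i j,
      HasDerivAt (fun τ => U τ i j) ((-(Complex.I • H θ + W θ) * U θ) i j) θ) :
    ∀ θ ∈ Set.Icc s t,
      ((U θ)ᴴ * U θ).PosSemidef ∧ ((1 : Matrix (Fin l) (Fin l) ℂ) - (U θ)ᴴ * U θ).PosSemidef := by
  intro θ hθ
  refine ⟨Matrix.posSemidef_conjTranspose_mul_self _, ?_⟩
  refine Matrix.PosSemidef.of_dotProduct_mulVec_nonneg ?_ ?_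
  · exact Matrix.isHermitian_one.sub (Matrix.posSemidef_conjTranspose_mul_self (U θ)).1
  intro v
  -- the squared norm of (U τ) *ᵥ v
  set w : ℝ → Fin l → ℂ := fun τ => U τ *ᵥ v with hwdef
  set f : ℝ → ℝ := fun τ => ∑ i, Complex.normSq (w τ i) with hfdef
  set g : ℝ → ℝ := fun τ =>
    ∑ i, 2 * ((starRingEnd ℂ) (w τ i) * ((-(Complex.I • H τ + W τ)) *ᵥ w τ) i).re with hgdef
  -- entrywise derivatives of w
  have hwderiv : ∀ x ∈ Set.Icc s t, ∀ i,
      HasDerivAt (fun τ => w τ i) (((-(Complex.I • H x + W x)) *ᵥ w x) i) x := by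
    intro x hx i
    have : HasDerivAt (fun τ => ∑ j, U τ i j * v j)
        (∑ j, (-(Complex.I • H x + W x) * U x) i j * v j) x :=
      HasDerivAt.fun_sum fun j _ => (hU x hx i j).mul_const (v j)
    have hval : (∑ j, (-(Complex.I • H x + W x) * U x) i j * v j)
        = ((-(Complex.I • H x + W x)) *ᵥ w x) i := by
      rw [hwdef]
      rw [Matrix.mulVec_mulVec]
      rfl
    rw [hval] at this
    exact this.congr_deriv rfl
  have key : ∀ x ∈ Set.Icc s t, HasDerivAt f (g x) x := by
    intro x hx
    exact HasDerivAt.fun_sum fun i _ => hasDerivAt_normSq_comp (hwderiv x hx i)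
  -- the derivative is nonpositive
  have hg : ∀ x ∈ Set.Icc s t, g x ≤ 0 := by
    intro x hx
    have hsum : g x = 2 * (star (w x) ⬝ᵥ ((-(Complex.I • H x + W x)) *ᵥ w x)).re := by
      rw [hgdef]
      simp only [dotProduct, Complex.re_sum, Finset.mul_sum, Pi.star_apply]
      rfl
    have ha : (star (w x) ⬝ᵥ (H x *ᵥ w x)).im = 0 := by
      rw [← Complex.conj_eq_iff_im]
      calc (starRingEnd ℂ) (star (w x) ⬝ᵥ (H x *ᵥ w x))
          = star (star (w x) ⬝ᵥ (H x *ᵥ w x)) := rfl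
        _ = star (H x *ᵥ w x) ⬝ᵥ w x := (Matrix.star_dotProduct _ _).symm
        _ = (star (w x) ᵥ* (H x)ᴴ) ⬝ᵥ w x := by rw [Matrix.star_mulVec]
        _ = (star (w x) ᵥ* (H x)) ⬝ᵥ w x := by rw [(hH x hx).eq]
        _ = star (w x) ⬝ᵥ (H x *ᵥ w x) := (Matrix.dotProduct_mulVec _ _ _).symm
    have hb : 0 ≤ star (w x) ⬝ᵥ (W x *ᵥ w x) := (hW x hx).dotProduct_mulVec_nonneg (w x)
    have hbre : 0 ≤ (star (w x) ⬝ᵥ (W x *ᵥ w x)).re := by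
      rw [Complex.le_def] at hb
      simpa using hb.1
    rw [hsum]
    have hexp : star (w x) ⬝ᵥ ((-(Complex.I • H x + W x)) *ᵥ w x)
        = -(Complex.I * (star (w x) ⬝ᵥ (H x *ᵥ w x)) + star (w x) ⬝ᵥ (W x *ᵥ w x)) := by
      rw [Matrix.neg_mulVec, Matrix.add_mulVec, Matrix.smul_mulVec]
      simp [dotProduct_add, dotProduct_smul, smul_eq_mul]
    rw [hexp]
    simp only [Complex.neg_re, Complex.add_re, Complex.I_mul_re]
    rw [ha]
    linarith
  -- f is antitone on [s,t]
  have hanti : AntitoneOn f (Set.Icc s t) := by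
    apply antitoneOn_of_deriv_nonpos (convex_Icc s t)
    · exact fun x hx => (key x hx).continuousAt.continuousWithinAt
    · intro x hx
      rw [interior_Icc] at hx
      exact ((key x (Set.mem_Icc_of_Ioo hx)).differentiableAt).differentiableWithinAt
    · intro x hx
      rw [interior_Icc] at hx
      rw [(key x (Set.mem_Icc_of_Ioo hx)).deriv]
      exact hg x (Set.mem_Icc_of_Ioo hx)
  have hfle : f θ ≤ f s := hanti (Set.left_mem_Icc.2 hst) hθ hθ.1
  have hws : w s = v := by rw [hwdef]; simp [hU0]
  -- assemble the quadratic form inequality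
  have hquad : star v ⬝ᵥ (((1 : Matrix (Fin l) (Fin l) ℂ) - (U θ)ᴴ * U θ) *ᵥ v)
      = ((f s - f θ : ℝ) : ℂ) := by
    have h1 : star v ⬝ᵥ (((U θ)ᴴ * U θ) *ᵥ v) = star (w θ) ⬝ᵥ w θ := by
      rw [← Matrix.mulVec_mulVec, Matrix.dotProduct_mulVec, ← Matrix.star_mulVec, hwdef]
    have h2 : ∀ x : Fin l → ℂ, star x ⬝ᵥ x = ((∑ i, Complex.normSq (x i) : ℝ) : ℂ) := by
      intro x
      simp [dotProduct, Complex.ofReal_sum, ← Complex.normSq_eq_conj_mul_self]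
    have hfs : f s = ∑ i, Complex.normSq (v i) := by simp only [hfdef, hws]
    rw [Matrix.sub_mulVec, dotProduct_sub, Matrix.one_mulVec, h1, h2, h2, hfs]
    norm_cast
  rw [hquad, Complex.zero_le_real]
  linarith
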